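/- arXiv:2207.06757 — 2 statements merged into one kernel-verified Lean document; each statement's English description precedes it below -/
import Mathlib

section
/- Let F be a field, R ≥ r ≥ 0 integers, and s ≥ 1. For i = 1,...,s let G_i be an R×w matrix over F whose column space intersects trivially the span of vectors b_1,...,b_{R-r} ∈ F^R, where b_1,...,b_{R-r} are linearly independent. Let B' = [b_1 ... b_{R-r}] (an R×(R-r) matrix). Form the (Rs)×(w + (R-r)s) block matrix M whose i-th block row is [G_i | 0 ... 0 B' 0 ... 0] with B' in the i-th block column of the right part. Then rank(M) = rank(G) + (R-r)s, where G is the (Rs)×w matrix obtained by stacking G_1,...,G_s. -/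
open Matrix

/-- rank of the block matrix [G | block-diagonal B'] equals
rank(G) + (R-r)s, where each block row is [G_i | 0 … B' … 0], the column space of each
G_i meets the span of the linearly independent vectors b_1,…,b_{R-r} trivially, and
B' = [b_1 … b_{R-r}]. -/
theorem stmt4 (F : Type*) [Field F] [DecidableEq F] (R r s w : ℕ) (hr : r ≤ R) (hs : 1 ≤ s)
    (G : Fin s → Matrix (Fin R) (Fin w) F)
    (b : Fin (R - r) → (Fin R → F))
    (hb : LinearIndependent F b)
    (hinter : ∀ i, LinearMap.range (G i).mulVecLin ⊓ Submodule.span F (Set.range b) = ⊥) :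
    (Matrix.of (fun (p : Fin s × Fin R) (c : Fin w ⊕ Fin s × Fin (R - r)) =>
        Sum.elim (fun j => G p.1 p.2 j)
          (fun jc => if p.1 = jc.1 then b jc.2 p.2 else 0) c)).rank
      = (Matrix.of fun (p : Fin s × Fin R) (j : Fin w) => G p.1 p.2 j).rank + (R - r) * s := by
  classical
  set A : Matrix (Fin s × Fin R) (Fin w) F :=
    Matrix.of fun (p : Fin s × Fin R) (j : Fin w) => G p.1 p.2 j with hA
  set B : Matrix (Fin s × Fin R) (Fin s × Fin (R - r)) F :=
    Matrix.of fun (p : Fin s × Fin R) (jc : Fin s × Fin (R - r)) =>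
      if p.1 = jc.1 then b jc.2 p.2 else 0 with hB
  have hM : (Matrix.of (fun (p : Fin s × Fin R) (c : Fin w ⊕ Fin s × Fin (R - r)) =>
        Sum.elim (fun j => G p.1 p.2 j)
          (fun jc => if p.1 = jc.1 then b jc.2 p.2 else 0) c)) = Matrix.fromCols A B := by
    ext p c; cases c <;> rfl
  rw [hM]
  -- compute the mulVec of A on each block
  have hAmul : ∀ (x : Fin w → F) (i : Fin s) (t : Fin R),
      (A *ᵥ x) (i, t) = ((G i) *ᵥ x) t := by
    intro x i t; simp [Matrix.mulVec, dotProduct, hA]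
  have hBmul : ∀ (y : Fin s × Fin (R - r) → F) (i : Fin s) (t : Fin R),
      (B *ᵥ y) (i, t) = (∑ k, y (i, k) • b k) t := by
    intro y i t
    simp only [Matrix.mulVec, dotProduct, hB, Matrix.of_apply]
    rw [Fintype.sum_prod_type]
    simp only [Finset.sum_apply, Pi.smul_apply, smul_eq_mul]
    rw [Finset.sum_eq_single i]
    · simp [mul_comm]
    · intro i' _ hi'; simp [hi'.symm]
    · simp
  -- range of fromColumns is the sup
  have hrange : LinearMap.range (Matrix.fromCols A B).mulVecLin =
      LinearMap.range A.mulVecLin ⊔ LinearMap.range B.mulVecLin := by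
    apply le_antisymm
    · rintro v ⟨z, rfl⟩
      have hz : z = Sum.elim (z ∘ Sum.inl) (z ∘ Sum.inr) := by
        ext c; cases c <;> rfl
      rw [Matrix.mulVecLin_apply, hz, Matrix.fromCols_mulVec_sumElim]
      exact Submodule.add_mem_sup ⟨z ∘ Sum.inl, rfl⟩ ⟨z ∘ Sum.inr, rfl⟩
    · rw [sup_le_iff]
      constructor
      · rintro v ⟨x, rfl⟩
        refine ⟨Sum.elim x 0, ?_⟩
        simp [Matrix.mulVecLin_apply, Matrix.fromCols_mulVec_sumElim]
      · rintro v ⟨y, rfl⟩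
        refine ⟨Sum.elim 0 y, ?_⟩
        simp [Matrix.mulVecLin_apply, Matrix.fromCols_mulVec_sumElim]
  -- the two ranges intersect trivially
  have hdisj : LinearMap.range A.mulVecLin ⊓ LinearMap.range B.mulVecLin = ⊥ := by
    rw [Submodule.eq_bot_iff]
    rintro v ⟨⟨x, hx⟩, ⟨y, hy⟩⟩
    have hv0 : ∀ i : Fin s, ∀ t : Fin R, v (i, t) = 0 := by
      intro i t
      have h1 : (fun t => v (i, t)) ∈
          LinearMap.range (G i).mulVecLin ⊓ Submodule.span F (Set.range b) := by
        constructor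
        · refine ⟨x, ?_⟩
          ext t'
          rw [Matrix.mulVecLin_apply, ← hAmul x i t', ← Matrix.mulVecLin_apply, hx]
        · have : (fun t => v (i, t)) = ∑ k, y (i, k) • b k := by
            ext t'
            rw [← hy, Matrix.mulVecLin_apply]
            exact hBmul y i t'
          rw [this]
          exact Submodule.sum_mem _ fun k _ =>
            Submodule.smul_mem _ _ (Submodule.subset_span ⟨k, rfl⟩)
      rw [hinter i] at h1
      exact congrFun h1 t
    ext ⟨i, t⟩
    exact hv0 i t
  -- B has injective mulVecLin
  have hBinj : Function.Injective B.mulVecLin := by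
    rw [← LinearMap.ker_eq_bot, Submodule.eq_bot_iff]
    intro y hy
    rw [LinearMap.mem_ker] at hy
    ext ⟨i, k⟩
    have h2 : ∑ k, y (i, k) • b k = 0 := by
      ext t
      rw [← hBmul y i t, ← Matrix.mulVecLin_apply, hy]
      rfl
    have := (Fintype.linearIndependent_iff.mp hb) (fun k => y (i, k)) h2
    exact this k
  have hrankB : Module.finrank F (LinearMap.range B.mulVecLin) = (R - r) * s := by
    rw [LinearMap.finrank_range_of_inj hBinj]
    simp [Module.finrank_pi, Fintype.card_prod, Nat.mul_comm]
  rw [Matrix.rank, Matrix.rank, hrange]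
  have := Submodule.finrank_sup_add_finrank_inf_eq
    (LinearMap.range A.mulVecLin) (LinearMap.range B.mulVecLin)
  rw [hdisj, finrank_bot, add_zero] at this
  rw [this, hrankB]
end

section
/- Let G = (V, E) be a finite directed acyclic graph, W ⊆ E an edge subset, D_W the set of source nodes from which some edge of W is reachable, and W' a minimum-size edge cut separating W from D_W (i.e., every path from a node of D_W to an edge of W passes through an edge of W', and no smaller edge set has this property). Then D_{W'} = D_W, where D_{W'} is the set of source nodes from which some edge of W' is reachable. -/
/-- Reachability in a directed graph, using only edges in the set `A`. -/
def GReach {V E : Type*} (tail head : E → V) (A : Set E) : V → V → Prop :=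
  Relation.ReflTransGen (fun a b => ∃ e ∈ A, tail e = a ∧ head e = b)

/-- `DWset tail head S W` is the set of source nodes in `S` from which some edge of `W`
is reachable. -/
def DWset {V E : Type*} (tail head : E → V) (S : Set V) (W : Set E) : Set V :=
  {σ ∈ S | ∃ e ∈ W, GReach tail head Set.univ σ (tail e)}

/-- `SepEdgeCut tail head C W U` : the edge set `C` is a cut separating the edge set `W`
from the node set `U`: every directed path from a node of `U` to an edge of `W` passes
through an edge of `C` (an edge `e ∈ W ∩ C` is cut at its subdivision point). -/
def SepEdgeCut {V E : Type*} (tail head : E → V) (C W : Set E) (U : Set V) : Prop :=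
  ∀ u ∈ U, ∀ e ∈ W, e ∉ C → ¬ GReach tail head Cᶜ u (tail e)

lemma greach_mono {V E : Type*} (tail head : E → V) {A B : Set E} (hAB : A ⊆ B) {x y : V}
    (h : GReach tail head A x y) : GReach tail head B x y :=
  Relation.ReflTransGen.mono (fun _ _ ⟨e, he, h1, h2⟩ => ⟨e, hAB he, h1, h2⟩) _ _ h

lemma greach_split {V E : Type*} (tail head : E → V) (A B : Set E) (e' : E)
    (hAB : ∀ f ∈ A, f ∈ B ∨ f = e') {x y : V}
    (h : GReach tail head A x y) :
    GReach tail head B x y ∨ GReach tail head A (head e') y := by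
  induction h using Relation.ReflTransGen.head_induction_on with
  | refl => exact Or.inl .refl
  | head hstep htail ih =>
    obtain ⟨f, hf, hfx, hfz⟩ := hstep
    rcases hAB f hf with hB | rfl
    · rcases ih with h1 | h1
      · exact Or.inl (Relation.ReflTransGen.head ⟨f, hB, hfx, hfz⟩ h1)
      · exact Or.inr h1
    · subst hfz; exact Or.inr htail

lemma greach_cutmeet {V E : Type*} (tail head : E → V) (C : Set E) {x y : V}
    (h : GReach tail head Set.univ x y) :
    GReach tail head Cᶜ x y ∨ ∃ e' ∈ C, GReach tail head Set.univ x (tail e') := by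
  induction h using Relation.ReflTransGen.head_induction_on with
  | head hstep htail ih =>
    obtain ⟨f, -, hfx, hfz⟩ := hstep
    by_cases hfC : f ∈ C
    · subst hfx; exact Or.inr ⟨f, hfC, .refl⟩
    · rcases ih with h1 | ⟨e', he', h1⟩
      · exact Or.inl (Relation.ReflTransGen.head ⟨f, hfC, hfx, hfz⟩ h1)
      · exact Or.inr ⟨e', he', Relation.ReflTransGen.head ⟨f, trivial, hfx, hfz⟩ h1⟩
  | refl => exact Or.inl .refl

/-- Lemma 1: if `W'` is a minimum cut separating the edge set `W` from
`D_W` in a finite DAG, then `D_{W'} = D_W`. -/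
theorem stmt11 {V E : Type*} [Fintype V] [Fintype E] [DecidableEq E]
    (tail head : E → V) (S : Set V)
    (hS : ∀ σ ∈ S, ∀ e : E, head e ≠ σ)
    (hacyc : ∀ v : V, ¬ Relation.TransGen (fun a b => ∃ e : E, tail e = a ∧ head e = b) v v)
    (W W' : Finset E)
    (hcut : SepEdgeCut tail head ↑W' ↑W (DWset tail head S ↑W))
    (hmin : ∀ C : Finset E,
      SepEdgeCut tail head ↑C ↑W (DWset tail head S ↑W) → W'.card ≤ C.card) :
    DWset tail head S ↑W' = DWset tail head S ↑W := by
  ext σ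
  simp only [DWset, Set.mem_setOf_eq, Finset.mem_coe]
  constructor
  · rintro ⟨hσS, e', he', hreach⟩
    refine ⟨hσS, ?_⟩
    have hnot : ¬ SepEdgeCut tail head ↑(W'.erase e') ↑W (DWset tail head S ↑W) := by
      intro hc
      have h1 := hmin _ hc
      have h2 : (W'.erase e').card < W'.card := Finset.card_erase_lt_of_mem he'
      omega
    unfold SepEdgeCut at hnot
    push_neg at hnot
    obtain ⟨u, hu, e, heW, heC, hpath⟩ := hnot
    by_cases hee : e = e'
    · subst hee; exact ⟨e, heW, hreach⟩
    · have heW' : e ∉ (↑W' : Set E) := fun h =>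
        heC (by simpa using And.intro h hee)
      have hnopath := hcut u hu e heW heW'
      rcases greach_split tail head ((↑(W'.erase e') : Set E))ᶜ ((↑W' : Set E))ᶜ e'
          (by
            intro f hf
            by_cases hfe : f = e'
            · exact Or.inr hfe
            · left
              intro hfW'
              exact hf (by simpa using And.intro hfW' hfe)) hpath with h1 | h1
      · exact absurd h1 hnopath
      · refine ⟨e, heW, hreach.trans (Relation.ReflTransGen.head ⟨e', trivial, rfl, rfl⟩ ?_)⟩
        exact greach_mono tail head (Set.subset_univ _) h1
  · rintro ⟨hσS, e, heW, hreach⟩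
    refine ⟨hσS, ?_⟩
    by_cases heW' : e ∈ W'
    · exact ⟨e, heW', hreach⟩
    · have hnopath := hcut σ ⟨hσS, e, heW, hreach⟩ e heW (by simpa using heW')
      rcases greach_cutmeet tail head (↑W' : Set E) hreach with h1 | ⟨e', he', h1⟩
      · exact absurd h1 hnopath
      · exact ⟨e', he', h1⟩
end
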